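/- Let H be a finite group, let c ≥ 1 be an integer, let A = (Z/2Z)^c act on the direct product K = ∏_{v ∈ A} H of 2^c copies of H by translating the coordinates (the regular permutation action of A on itself), and let G = K ⋊ A be the corresponding wreath product H ≀ A. If R is a radical 2-subgroup of G whose image under the canonical projection G → A is all of A (equivalently, R meets every coset of K in G), then there exist g ∈ G and a radical 2-subgroup R' of H such that gRg⁻¹ is the subgroup {(f, a) ∈ K ⋊ A : f(v) ∈ R' for all v ∈ A}, i.e., gRg⁻¹ = (R')^{2^c} ⋊ A. -/

import Mathlib

/-- The largest normal `p`-subgroup `O_p(G)` of a group `G`: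
the join of all normal `p`-subgroups of `G`. -/
def pCore' (p : ℕ) (G : Type*) [Group G] : Subgroup G :=
  sSup {H : Subgroup G | H.Normal ∧ IsPGroup p H}

/-- `Q` is a radical `p`-subgroup of `G` if `Q = O_p(N_G(Q))`. -/
def IsRadicalPSubgroup (p : ℕ) {G : Type*} [Group G] (Q : Subgroup G) : Prop :=
  Q.subgroupOf (Subgroup.normalizer (Q : Set G)) = pCore' p (Subgroup.normalizer (Q : Set G))

/-- The elementary abelian group `(Z/2Z)^c`. -/
abbrev EA (c : ℕ) : Type := Fin c → Multiplicative (ZMod 2)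

/-- The regular (translation) action of `A = (Z/2Z)^c` on the direct product
`∏_{v ∈ A} H`, permuting the coordinates. -/
def wreathAct (H : Type*) [Group H] (c : ℕ) : EA c →* MulAut (EA c → H) where
  toFun a :=
    { toFun := fun f v => f (a⁻¹ * v)
      invFun := fun f v => f (a * v)
      left_inv := fun f => funext fun v => by simp
      right_inv := fun f => funext fun v => by simp
      map_mul' := fun f g => rfl }
  map_one' := by
    apply MulEquiv.ext
    intro f
    funext v
    simp
  map_mul' := fun a b => by
    apply MulEquiv.ext
    intro f
    funext v
    simp [mul_assoc]

/-- The regular wreath product `H ≀ (Z/2Z)^c = (∏_{v ∈ A} H) ⋊ A`. -/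
abbrev WreathProd (H : Type*) [Group H] (c : ℕ) : Type _ :=
  SemidirectProduct (EA c → H) (EA c) (wreathAct H c)

/-- For a subgroup `R'` of `H`, the subgroup `(R')^{2^c} ⋊ A` of the wreath product
`H ≀ A`, consisting of the pairs `(f, a)` with `f v ∈ R'` for all `v ∈ A`. -/
def fullWreathSubgroup (H : Type*) [Group H] (c : ℕ) (R' : Subgroup H) :
    Subgroup (WreathProd H c) where
  carrier := {x | ∀ v : EA c, x.left v ∈ R'}
  one_mem' := fun v => by
    rw [SemidirectProduct.one_left]
    exact R'.one_mem
  mul_mem' := by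
    intro x y hx hy v
    rw [SemidirectProduct.mul_left]
    exact R'.mul_mem (hx v) (hy _)
  inv_mem' := by
    intro x hx v
    rw [SemidirectProduct.inv_left]
    exact R'.inv_mem (hx _)

section Aux

variable {p : ℕ} {G : Type*} [Group G]

lemma isPGroup_pi {ι : Type*} [Finite ι] {H : ι → Type*} [∀ i, Group (H i)]
    (h : ∀ i, IsPGroup p (H i)) : IsPGroup p (∀ i, H i) := by
  cases nonempty_fintype ι
  intro g
  choose k hk using fun i => h i (g i)
  refine ⟨Finset.univ.sup k, funext fun i => ?_⟩
  have hle : k i ≤ Finset.univ.sup k := Finset.le_sup (Finset.mem_univ i)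
  have h1 : g i ^ p ^ Finset.univ.sup k = 1 := by
    calc g i ^ p ^ Finset.univ.sup k
        = (g i ^ p ^ k i) ^ p ^ (Finset.univ.sup k - k i) := by
          rw [← pow_mul, ← pow_add, Nat.add_sub_cancel' hle]
      _ = 1 := by rw [hk i, one_pow]
  simpa using h1

lemma pCore'_isPGroup (p : ℕ) (G : Type*) [Group G] [Finite G] :
    IsPGroup p (pCore' p G) := by
  haveI : Finite (Subgroup G) := Finite.of_injective _ SetLike.coe_injective
  have key : ∀ t : Finset (Subgroup G), (∀ X ∈ t, X.Normal ∧ IsPGroup p X) →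
      IsPGroup p (↥(t.sup id)) ∧ (t.sup id).Normal := by
    intro t
    classical
    induction t using Finset.induction_on with
    | empty =>
      intro _
      rw [Finset.sup_empty]
      exact ⟨IsPGroup.of_bot, inferInstance⟩
    | @insert a t ha ih =>
      intro hsub
      obtain ⟨ih1, ih2⟩ := ih fun X hX => hsub X (Finset.mem_insert_of_mem hX)
      have haX := hsub a (Finset.mem_insert_self a t)
      have hsup : (insert a t).sup id = a ⊔ t.sup id := by
        rw [Finset.sup_insert, id_eq]
      rw [hsup]
      haveI := ih2
      haveI := haX.1
      exact ⟨IsPGroup.to_sup_of_normal_right haX.2 ih1, inferInstance⟩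
  have hfin : {H : Subgroup G | H.Normal ∧ IsPGroup p H}.Finite := Set.toFinite _
  have hk := key hfin.toFinset (fun X hX => hfin.mem_toFinset.mp hX)
  have heq : pCore' p G = hfin.toFinset.sup id := by
    rw [pCore', Finset.sup_id_eq_sSup, hfin.coe_toFinset]
  rw [heq]
  exact hk.1

/-- A reformulation of being a radical `p`-subgroup, for `p = 2`. -/
def Rad2 {G : Type*} [Group G] (R : Subgroup G) : Prop :=
  IsPGroup 2 R ∧ ∀ X : Subgroup G, X ≤ (Subgroup.normalizer (R : Set G)) →
    (∀ n ∈ (Subgroup.normalizer (R : Set G)), ∀ x ∈ X, n * x * n⁻¹ ∈ X) → IsPGroup 2 X → X ≤ R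

lemma rad2_of_isRadical [Finite G] {R : Subgroup G} (h : IsRadicalPSubgroup 2 R) :
    Rad2 R := by
  have hcore : R.subgroupOf (Subgroup.normalizer (R : Set G)) = pCore' 2 (Subgroup.normalizer (R : Set G)) := h
  constructor
  · have := pCore'_isPGroup 2 (Subgroup.normalizer (R : Set G))
    rw [← hcore] at this
    exact this.of_equiv (Subgroup.subgroupOfEquivOfLe Subgroup.le_normalizer)
  · intro X hle hstab hXp
    have hX' : (X.subgroupOf (Subgroup.normalizer (R : Set G))).Normal := by
      constructor
      intro x hx n
      rw [Subgroup.mem_subgroupOf] at hx ⊢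
      have := hstab n n.2 x hx
      simpa using this
    have hX'p : IsPGroup 2 (X.subgroupOf (Subgroup.normalizer (R : Set G))) := hXp.comap_subtype
    have hXle : X.subgroupOf (Subgroup.normalizer (R : Set G)) ≤ pCore' 2 (Subgroup.normalizer (R : Set G)) :=
      le_sSup ⟨hX', hX'p⟩
    rw [← hcore] at hXle
    intro x hx
    have hxN : x ∈ (Subgroup.normalizer (R : Set G)) := hle hx
    have : (⟨x, hxN⟩ : (Subgroup.normalizer (R : Set G))) ∈ X.subgroupOf (Subgroup.normalizer (R : Set G)) :=
      Subgroup.mem_subgroupOf.2 hx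
    exact Subgroup.mem_subgroupOf.1 (hXle this)

lemma rad2_conj {R : Subgroup G} (h : Rad2 R) (g : G) :
    Rad2 (R.map (MulAut.conj g).toMonoidHom) := by
  set φ := MulAut.conj g with hφ
  have hnorm : (Subgroup.normalizer ((R.map φ.toMonoidHom) : Set G)) = (Subgroup.normalizer (R : Set G)).map φ.toMonoidHom :=
    (Subgroup.map_equiv_normalizer_eq R φ).symm
  constructor
  · exact h.1.map _
  · intro X hle hstab hXp
    set ψ := (MulAut.conj g).symm with hψ
    have hYle : X.map ψ.toMonoidHom ≤ (Subgroup.normalizer (R : Set G)) := by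
      rintro y ⟨x, hx, rfl⟩
      have := hle hx
      rw [hnorm] at this
      obtain ⟨n, hn, rfl⟩ := this
      simpa [hψ, hφ, mul_assoc] using hn
    have hY : X.map ψ.toMonoidHom ≤ R := by
      refine h.2 _ hYle ?_ (hXp.map _)
      rintro n hn y ⟨x, hx, rfl⟩
      have hφn : φ n ∈ (Subgroup.normalizer ((R.map φ.toMonoidHom) : Set G)) := by
        rw [hnorm]
        exact ⟨n, hn, rfl⟩
      have hmem : φ n * x * (φ n)⁻¹ ∈ X := hstab _ hφn x hx
      refine ⟨φ n * x * (φ n)⁻¹, hmem, ?_⟩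
      simp only [hψ, hφ, map_mul, map_inv, MulAut.conj_apply, MulAut.conj_symm_apply,
        MulEquiv.coe_toMonoidHom]
      group
    intro x hx
    have : ψ x ∈ R := hY ⟨x, hx, rfl⟩
    exact ⟨ψ x, this, by simp only [hψ, hφ, MulEquiv.coe_toMonoidHom, MulEquiv.apply_symm_apply]⟩

lemma engine [Finite G] {R P : Subgroup G}
    (hR : Rad2 R) (hPp : IsPGroup 2 P)
    (hN : (Subgroup.normalizer (R : Set G)) ≤ (Subgroup.normalizer (P : Set G))) : P ≤ R := by
  haveI : Fact (Nat.Prime 2) := ⟨Nat.prime_two⟩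
  set T := R ⊔ P with hTdef
  have hRT : R ≤ T := le_sup_left
  have hPT : P ≤ T := le_sup_right
  have hTp : IsPGroup 2 T :=
    IsPGroup.to_sup_of_normal_right' hR.1 hPp (le_trans Subgroup.le_normalizer hN)
  have hXle : P ⊓ (Subgroup.normalizer (R : Set G)) ≤ R := by
    refine hR.2 _ inf_le_right ?_ (hPp.to_le inf_le_left)
    intro n hn x hx
    obtain ⟨hxP, hxN⟩ := Subgroup.mem_inf.mp hx
    refine Subgroup.mem_inf.mpr ⟨(Subgroup.mem_normalizer_iff.mp (hN hn) x).mp hxP,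
      mul_mem (mul_mem hn hxN) (inv_mem hn)⟩
  suffices hTR : T ≤ R from le_trans hPT hTR
  by_contra hcon
  haveI : Group.IsNilpotent ↥T := hTp.isNilpotent
  have hNC : NormalizerCondition ↥T := normalizerCondition_of_isNilpotent
  have hR'lt : R.subgroupOf T < ⊤ := by
    rw [lt_top_iff_ne_top]
    intro he
    exact hcon (Subgroup.subgroupOf_eq_top.mp he)
  obtain ⟨z, hzn, hznR⟩ := SetLike.exists_of_lt (hNC _ hR'lt)
  have hconjz : ∀ w : ↥T, w ∈ (Subgroup.normalizer ((R.subgroupOf T) : Set ↥T)) →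
      ∀ h ∈ R, (w : G) * h * (w : G)⁻¹ ∈ R := by
    intro w hw h hh
    have hhT : h ∈ T := hRT hh
    have h1 : (⟨h, hhT⟩ : ↥T) ∈ R.subgroupOf T := Subgroup.mem_subgroupOf.2 hh
    have h2 := (Subgroup.mem_normalizer_iff.mp hw _).mp h1
    exact Subgroup.mem_subgroupOf.1 h2
  have hzN : (z : G) ∈ (Subgroup.normalizer (R : Set G)) := by
    rw [Subgroup.mem_normalizer_iff]
    intro h
    constructor
    · exact hconjz z hzn h
    · intro hh
      have := hconjz z⁻¹ (inv_mem hzn) _ hh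
      simpa [mul_assoc] using this
  let RP : Subgroup G :=
    { carrier := {x | ∃ r ∈ R, ∃ q ∈ P, x = r * q}
      one_mem' := ⟨1, R.one_mem, 1, P.one_mem, (mul_one 1).symm⟩
      mul_mem' := by
        rintro a b ⟨r1, hr1, p1, hp1, rfl⟩ ⟨r2, hr2, p2, hp2, rfl⟩
        refine ⟨r1 * r2, mul_mem hr1 hr2, (r2⁻¹ * p1 * r2) * p2, mul_mem ?_ hp2, by group⟩
        have := (Subgroup.mem_normalizer_iff.mp
          (hN (Subgroup.le_normalizer (inv_mem hr2))) p1).mp hp1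
        simpa using this
      inv_mem' := by
        rintro a ⟨r, hr, q, hq, rfl⟩
        refine ⟨r⁻¹, inv_mem hr, r * q⁻¹ * r⁻¹, ?_, by group⟩
        have := (Subgroup.mem_normalizer_iff.mp
          (hN (Subgroup.le_normalizer hr)) q⁻¹).mp (inv_mem hq)
        simpa using this }
  have hTRP : T ≤ RP := by
    rw [hTdef]
    refine sup_le ?_ ?_
    · intro r hr; exact ⟨r, hr, 1, P.one_mem, (mul_one r).symm⟩
    · intro q hq; exact ⟨1, R.one_mem, q, hq, (one_mul q).symm⟩
  obtain ⟨r, hr, q, hq, hrq⟩ := hTRP z.2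
  have hqN : q ∈ (Subgroup.normalizer (R : Set G)) := by
    have hq' : q = r⁻¹ * (z : G) := by rw [hrq]; group
    rw [hq']
    exact mul_mem (inv_mem (Subgroup.le_normalizer hr)) hzN
  have hqR : q ∈ R := hXle ⟨hq, hqN⟩
  have hzR : (z : G) ∈ R := by rw [hrq]; exact mul_mem hr hqR
  exact hznR (Subgroup.mem_subgroupOf.2 hzR)

end Aux

namespace WreathAux

variable {H : Type*} [Group H] {c : ℕ}

lemma EA.inv_eq (a : EA c) : a⁻¹ = a := by
  funext v
  show (a v)⁻¹ = a v
  revert a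
  have : ∀ x : Multiplicative (ZMod 2), x⁻¹ = x := by decide
  intro a; exact this (a v)

lemma EA.mul_self (a : EA c) : a * a = 1 := by
  have h := inv_mul_cancel a
  rwa [EA.inv_eq] at h

lemma EA.mul_mul_cancel (a v : EA c) : a * (a * v) = v := by
  rw [← mul_assoc, EA.mul_self, one_mul]

instance [Finite H] : Finite (WreathProd H c) :=
  Finite.of_injective (fun g => (g.left, g.right))
    (fun a b h => by
      cases a; cases b
      simp only [Prod.mk.injEq] at h
      simp [h.1, h.2])

lemma wa_apply (a : EA c) (f : EA c → H) (v : EA c) :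
    (wreathAct H c a f) v = f (a⁻¹ * v) := rfl

lemma conj_inl (n : WreathProd H c) (f : EA c → H) :
    n * SemidirectProduct.inl f * n⁻¹ =
      SemidirectProduct.inl (fun v => n.left v * f (n.right⁻¹ * v) * (n.left v)⁻¹) := by
  apply SemidirectProduct.ext
  · funext v
    simp only [SemidirectProduct.mul_left, SemidirectProduct.inv_left,
      SemidirectProduct.left_inl, SemidirectProduct.right_inl, SemidirectProduct.mul_right,
      SemidirectProduct.inv_right, mul_one]
    rw [Pi.mul_apply, Pi.mul_apply, wa_apply, wa_apply, wa_apply, Pi.inv_apply,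
      inv_inv, mul_inv_cancel_left]
  · simp [SemidirectProduct.mul_right, SemidirectProduct.inv_right]

lemma inl_mul_mul_inl (u w : EA c → H) (r : WreathProd H c) :
    SemidirectProduct.inl u * r * SemidirectProduct.inl w =
      ⟨u * r.left * wreathAct H c r.right w, r.right⟩ := by
  apply SemidirectProduct.ext
  · show (u * wreathAct H c (SemidirectProduct.inl u : WreathProd H c).right r.left) *
      wreathAct H c ((SemidirectProduct.inl u : WreathProd H c).right * r.right) w = _
    rw [SemidirectProduct.right_inl, map_one, one_mul]
    rfl
  · show ((1 : EA c) * r.right) * 1 = r.right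
    rw [one_mul, mul_one]

end WreathAux

open WreathAux

/-- Let `H` be a finite group, `c ≥ 1`, and let `G = H ≀ A` be the regular wreath product with
`A = (Z/2Z)^c`.  If `R` is a radical `2`-subgroup of `G` whose image under the canonical
projection `G → A` is all of `A`, then `R` is conjugate to `(R')^{2^c} ⋊ A` for some radical
`2`-subgroup `R'` of `H`. -/
theorem statement_6 (H : Type*) [Group H] [Finite H] (c : ℕ) (hc : 1 ≤ c)
    (R : Subgroup (WreathProd H c))
    (hR : IsRadicalPSubgroup 2 R)
    (hproj : R.map SemidirectProduct.rightHom = ⊤) :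
    ∃ (g : WreathProd H c) (R' : Subgroup H), IsRadicalPSubgroup 2 R' ∧
      R.map (MulAut.conj g).toMonoidHom = fullWreathSubgroup H c R' := by
  classical
  -- choose sections of the projection
  have hsec : ∀ a : EA c, ∃ r : WreathProd H c, r ∈ R ∧ r.right = a := by
    intro a
    have ha : a ∈ R.map SemidirectProduct.rightHom := by rw [hproj]; exact Subgroup.mem_top a
    obtain ⟨r, hr, hra⟩ := ha
    exact ⟨r, hr, hra⟩
  choose sec hsecR hsecA using hsec
  set x : EA c → H := fun v => (sec v).left v with hxdef
  set g : WreathProd H c := SemidirectProduct.inl x⁻¹ with hgdef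
  set φg := (MulAut.conj g).toMonoidHom with hφg
  set R₂ := R.map φg with hR₂def
  have hrad₂ : Rad2 R₂ := rad2_conj (rad2_of_isRadical hR) g
  set N₂ := (Subgroup.normalizer (R₂ : Set (WreathProd H c))) with hN₂
  set Dv : EA c → Subgroup H := fun v =>
    Subgroup.map (Pi.evalMonoidHom (fun _ : EA c => H) v)
      (R₂.comap (SemidirectProduct.inl : (EA c → H) →* WreathProd H c)) with hDvdef
  have hDv_mem : ∀ (v : EA c) (h : H), h ∈ Dv v ↔ ∃ f : EA c → H,
      SemidirectProduct.inl f ∈ R₂ ∧ f v = h := by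
    intro v h
    simp [hDvdef, Subgroup.mem_map, Subgroup.mem_comap]
  have hF0 : ∀ d : WreathProd H c, d ∈ R₂ → d.right = 1 → ∀ v, d.left v ∈ Dv v := by
    intro d hd hd1 v
    rw [hDv_mem]
    refine ⟨d.left, ?_, rfl⟩
    have hde : SemidirectProduct.inl d.left = d := SemidirectProduct.ext rfl hd1.symm
    rwa [hde]
  have hF1 : ∀ n ∈ N₂, ∀ v : EA c, ∀ h ∈ Dv (n.right * v),
      n.left v * h * (n.left v)⁻¹ ∈ Dv v := by
    intro n hn v h hh
    rw [hDv_mem] at hh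
    obtain ⟨f, hfR, hfv⟩ := hh
    have hd : n * SemidirectProduct.inl f * n⁻¹ ∈ R₂ :=
      (Subgroup.mem_normalizer_iff.mp hn _).mp hfR
    rw [conj_inl] at hd
    have hres := hF0 _ hd rfl v
    simpa [EA.inv_eq, hfv] using hres
  have hF2 : ∀ n ∈ N₂, ∀ v : EA c, ∀ h ∈ Dv v,
      (n.left v)⁻¹ * h * n.left v ∈ Dv (n.right * v) := by
    intro n hn v h hh
    have hn' : n⁻¹ ∈ N₂ := inv_mem hn
    have hh' : h ∈ Dv (n⁻¹.right * (n.right * v)) := by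
      simpa [SemidirectProduct.inv_right, EA.inv_eq, EA.mul_mul_cancel] using hh
    have hres := hF1 n⁻¹ hn' (n.right * v) h hh'
    simpa [SemidirectProduct.inv_left, wa_apply, Pi.inv_apply, EA.inv_eq,
      EA.mul_mul_cancel] using hres
  have hDvp : ∀ v, IsPGroup 2 (Dv v) := by
    intro v
    have h1 : IsPGroup 2
        (R₂.comap (SemidirectProduct.inl : (EA c → H) →* WreathProd H c)) :=
      hrad₂.1.comap_of_injective _ SemidirectProduct.inl_injective
    rw [hDvdef]
    exact h1.map _
  -- the product of the projections is a 2-group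
  have hpiP : ∀ (D : EA c → Subgroup H), (∀ v, IsPGroup 2 (D v)) →
      IsPGroup 2 ((Subgroup.pi Set.univ D).map
        (SemidirectProduct.inl : (EA c → H) →* WreathProd H c)) := by
    intro D hD
    have hbig : IsPGroup 2 (∀ v : EA c, ↥(D v)) := isPGroup_pi hD
    have hEp : IsPGroup 2 (Subgroup.pi Set.univ D) := by
      let ϕ : ↥(Subgroup.pi Set.univ D) →* (∀ v : EA c, ↥(D v)) :=
        { toFun := fun q => fun v => ⟨q.1 v, q.2 v (Set.mem_univ v)⟩
          map_one' := rfl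
          map_mul' := fun a b => rfl }
      have hinj : Function.Injective ϕ := by
        intro q q' hqq
        ext v
        exact congrArg Subtype.val (congrFun hqq v)
      exact hbig.of_injective ϕ hinj
    exact hEp.map _
  -- the full product of the projections lies in R₂ (the "engine" step)
  have hNE : N₂ ≤ Subgroup.normalizer (((Subgroup.pi Set.univ Dv).map
      (SemidirectProduct.inl : (EA c → H) →* WreathProd H c)) : Set (WreathProd H c)) := by
    have key : ∀ m ∈ N₂, ∀ h ∈ (Subgroup.pi Set.univ Dv).map
        (SemidirectProduct.inl : (EA c → H) →* WreathProd H c),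
        m * h * m⁻¹ ∈ (Subgroup.pi Set.univ Dv).map
        (SemidirectProduct.inl : (EA c → H) →* WreathProd H c) := by
      intro m hm h hh
      obtain ⟨f, hf, rfl⟩ := hh
      rw [conj_inl]
      refine Subgroup.mem_map_of_mem _ ((Subgroup.mem_pi _).mpr fun v _ => ?_)
      have hfv : f (m.right * v) ∈ Dv (m.right * v) :=
        (Subgroup.mem_pi _).mp hf _ (Set.mem_univ _)
      have hres := hF1 m hm v _ hfv
      simpa [EA.inv_eq] using hres
    intro n hn
    rw [Subgroup.mem_normalizer_iff]
    intro h
    constructor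
    · exact key n hn h
    · intro hh
      have hres := key n⁻¹ (inv_mem hn) _ hh
      simpa [mul_assoc] using hres
  have hE : (Subgroup.pi Set.univ Dv).map
      (SemidirectProduct.inl : (EA c → H) →* WreathProd H c) ≤ R₂ :=
    engine hrad₂ (hpiP Dv hDvp) hNE
  -- conjugation formula
  have hginv : g⁻¹ = SemidirectProduct.inl x := by
    rw [hgdef, ← map_inv, inv_inv]
  have hφg_apply : ∀ r : WreathProd H c,
      φg r = ⟨x⁻¹ * r.left * wreathAct H c r.right x, r.right⟩ := by
    intro r
    have : φg r = SemidirectProduct.inl x⁻¹ * r * SemidirectProduct.inl x := by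
      rw [hφg]
      show g * r * g⁻¹ = _
      rw [hginv, hgdef]
    rw [this]
    exact inl_mul_mul_inl x⁻¹ x r
  -- representatives of each fiber with coordinates in the projections
  have hrep : ∀ a : EA c, ∃ r, r ∈ R₂ ∧ r.right = a ∧ ∀ v, r.left v ∈ Dv v := by
    intro a
    refine ⟨φg (sec a), Subgroup.mem_map_of_mem _ (hsecR a), ?_, ?_⟩
    · rw [hφg_apply]
      exact hsecA a
    · intro v
      have hqR : sec a * sec (a * v) * (sec v)⁻¹ ∈ R :=
        mul_mem (mul_mem (hsecR a) (hsecR _)) (inv_mem (hsecR v))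
      have hdR : φg (sec a * sec (a * v) * (sec v)⁻¹) ∈ R₂ :=
        Subgroup.mem_map_of_mem _ hqR
      have hqright : (sec a * sec (a * v) * (sec v)⁻¹).right = 1 := by
        simp only [SemidirectProduct.mul_right, SemidirectProduct.inv_right, hsecA]
        rw [EA.mul_mul_cancel, EA.inv_eq, EA.mul_self]
      have hdright : (φg (sec a * sec (a * v) * (sec v)⁻¹)).right = 1 := by
        rw [hφg_apply]
        exact hqright
      have hres := hF0 _ hdR hdright v
      have heq : (φg (sec a * sec (a * v) * (sec v)⁻¹)).left v = (φg (sec a)).left v := by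
        rw [hφg_apply, hφg_apply]
        simp only [SemidirectProduct.mul_left, SemidirectProduct.mul_right,
          SemidirectProduct.inv_left, SemidirectProduct.inv_right,
          Pi.mul_apply, Pi.inv_apply, wa_apply, hsecA, EA.inv_eq, EA.mul_mul_cancel,
          EA.mul_self, one_mul, mul_one, hxdef]
        group
      rw [heq] at hres
      exact hres
  -- R₂ contains the acting group A
  have hA : ∀ a : EA c, (⟨1, a⟩ : WreathProd H c) ∈ R₂ := by
    intro a
    obtain ⟨r, hrR, hra, hrD⟩ := hrep a
    have h1 : SemidirectProduct.inl r.left ∈ R₂ :=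
      hE (Subgroup.mem_map_of_mem _ ((Subgroup.mem_pi _).mpr fun v _ => hrD v))
    have h2 : (SemidirectProduct.inl r.left)⁻¹ * r ∈ R₂ := mul_mem (inv_mem h1) hrR
    have h3 : (SemidirectProduct.inl r.left)⁻¹ * r = ⟨1, a⟩ := by
      rw [← map_inv]
      apply SemidirectProduct.ext
      · show r.left⁻¹ * wreathAct H c (SemidirectProduct.inl r.left⁻¹).right r.left = 1
        rw [SemidirectProduct.right_inl, map_one]
        simp
      · show (1 : EA c) * r.right = a
        rw [one_mul, hra]
    rwa [h3] at h2
  -- the projections are constant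
  have hconst : ∀ a v : EA c, Dv (a * v) = Dv v := by
    have hle : ∀ a v : EA c, Dv (a * v) ≤ Dv v := by
      intro a v h hh
      have hn : (⟨1, a⟩ : WreathProd H c) ∈ N₂ := Subgroup.le_normalizer (hA a)
      have hres := hF1 ⟨1, a⟩ hn v h hh
      simpa using hres
    intro a v
    refine le_antisymm (hle a v) ?_
    have hres := hle a (a * v)
    rwa [EA.mul_mul_cancel] at hres
  set Q := Dv 1 with hQdef
  have hDvQ : ∀ v, Dv v = Q := by
    intro v
    rw [hQdef, ← hconst v 1, mul_one]
  -- R₂ equals the full wreath subgroup on Q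
  have hfull : R₂ = fullWreathSubgroup H c Q := by
    apply le_antisymm
    · intro r hr
      show ∀ v, r.left v ∈ Q
      intro v
      have hd : r * ⟨1, r.right⟩⁻¹ ∈ R₂ := mul_mem hr (inv_mem (hA r.right))
      have hdright : (r * ⟨1, r.right⟩⁻¹).right = 1 := by
        simp [SemidirectProduct.mul_right, SemidirectProduct.inv_right]
      have hdleft : (r * ⟨1, r.right⟩⁻¹).left = r.left := by
        simp [SemidirectProduct.mul_left, SemidirectProduct.inv_left]
      have hres := hF0 _ hd hdright v
      rw [hdleft, hDvQ] at hres
      exact hres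
    · intro y hy
      have hy' : ∀ v, y.left v ∈ Q := hy
      have h1 : SemidirectProduct.inl y.left ∈ R₂ :=
        hE (Subgroup.mem_map_of_mem _ ((Subgroup.mem_pi _).mpr fun v _ => by
          rw [hDvQ]; exact hy' v))
      have h2 : SemidirectProduct.inl y.left * ⟨1, y.right⟩ ∈ R₂ :=
        mul_mem h1 (hA y.right)
      have h3 : SemidirectProduct.inl y.left * ⟨1, y.right⟩ = y := by
        apply SemidirectProduct.ext
        · show y.left * wreathAct H c (SemidirectProduct.inl y.left).right 1 = y.left
          rw [map_one, mul_one]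
        · show (1 : EA c) * y.right = y.right
          rw [one_mul]
      rwa [h3] at h2
  -- Q is radical
  have hQp : IsPGroup 2 Q := hDvp 1
  have hnormL : ∀ n ∈ N₂, ∀ v : EA c, n.left v ∈ (Subgroup.normalizer (Q : Set H)) := by
    intro n hn v
    rw [Subgroup.mem_normalizer_iff]
    intro h
    constructor
    · intro hh
      have hh' : h ∈ Dv (n.right * v) := by rw [hDvQ]; exact hh
      have hres := hF1 n hn v h hh'
      rwa [hDvQ] at hres
    · intro hh
      have hh' : n.left v * h * (n.left v)⁻¹ ∈ Dv v := by rw [hDvQ]; exact hh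
      have hres := hF2 n hn v _ hh'
      rw [hDvQ] at hres
      simpa [mul_assoc] using hres
  have claim : ∀ L : Subgroup H, IsPGroup 2 L →
      (∀ n ∈ (Subgroup.normalizer (Q : Set H)), ∀ l ∈ L, n * l * n⁻¹ ∈ L) → L ≤ Q := by
    intro L hLp hLstab
    have hPp : IsPGroup 2 ((Subgroup.pi Set.univ (fun _ : EA c => L)).map
        (SemidirectProduct.inl : (EA c → H) →* WreathProd H c)) :=
      hpiP _ (fun _ => hLp)
    have key : ∀ m ∈ N₂, ∀ h ∈ (Subgroup.pi Set.univ (fun _ : EA c => L)).map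
        (SemidirectProduct.inl : (EA c → H) →* WreathProd H c),
        m * h * m⁻¹ ∈ (Subgroup.pi Set.univ (fun _ : EA c => L)).map
        (SemidirectProduct.inl : (EA c → H) →* WreathProd H c) := by
      intro m hm h hh
      obtain ⟨f, hf, rfl⟩ := hh
      rw [conj_inl]
      refine Subgroup.mem_map_of_mem _ ((Subgroup.mem_pi _).mpr fun v _ => ?_)
      exact hLstab _ (hnormL m hm v) _ ((Subgroup.mem_pi _).mp hf _ (Set.mem_univ _))
    have hNP : N₂ ≤ Subgroup.normalizer (((Subgroup.pi Set.univ (fun _ : EA c => L)).map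
        (SemidirectProduct.inl : (EA c → H) →* WreathProd H c)) : Set (WreathProd H c)) := by
      intro n hn
      rw [Subgroup.mem_normalizer_iff]
      intro h
      constructor
      · exact key n hn h
      · intro hh
        have hres := key n⁻¹ (inv_mem hn) _ hh
        simpa [mul_assoc] using hres
    have hPR := engine hrad₂ hPp hNP
    intro l hl
    have h1 : SemidirectProduct.inl (fun _ : EA c => l) ∈ R₂ :=
      hPR (Subgroup.mem_map_of_mem _ ((Subgroup.mem_pi _).mpr fun v _ => hl))
    have h2 := hF0 _ h1 rfl 1
    rw [hDvQ] at h2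
    exact h2
  have hrad' : IsRadicalPSubgroup 2 Q := by
    unfold IsRadicalPSubgroup pCore'
    haveI : (Q.subgroupOf (Subgroup.normalizer (Q : Set H))).Normal := Subgroup.normal_in_normalizer
    apply le_antisymm
    · have hQsub : IsPGroup 2 (Q.subgroupOf (Subgroup.normalizer (Q : Set H))) := hQp.comap_subtype
      exact le_sSup ⟨inferInstance, hQsub⟩
    · refine sSup_le ?_
      rintro X ⟨hXn, hXp⟩
      haveI := hXn
      have hQsub : IsPGroup 2 (Q.subgroupOf (Subgroup.normalizer (Q : Set H))) := hQp.comap_subtype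
      have hMp : IsPGroup 2 (↥(X ⊔ Q.subgroupOf (Subgroup.normalizer (Q : Set H)))) :=
        IsPGroup.to_sup_of_normal_right hXp hQsub
      haveI hMn : (X ⊔ Q.subgroupOf (Subgroup.normalizer (Q : Set H))).Normal := inferInstance
      have hL'p : IsPGroup 2 ((X ⊔ Q.subgroupOf (Subgroup.normalizer (Q : Set H))).map (Subgroup.normalizer (Q : Set H)).subtype) :=
        hMp.map _
      have hstab : ∀ n ∈ (Subgroup.normalizer (Q : Set H)),
          ∀ l ∈ (X ⊔ Q.subgroupOf (Subgroup.normalizer (Q : Set H))).map (Subgroup.normalizer (Q : Set H)).subtype,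
          n * l * n⁻¹ ∈ (X ⊔ Q.subgroupOf (Subgroup.normalizer (Q : Set H))).map (Subgroup.normalizer (Q : Set H)).subtype := by
        rintro n hn l ⟨m, hm, rfl⟩
        exact ⟨⟨n, hn⟩ * m * ⟨n, hn⟩⁻¹, hMn.conj_mem m hm ⟨n, hn⟩, rfl⟩
      have hL'le := claim _ hL'p hstab
      intro xx hxx
      have hmem : (xx : H) ∈ (X ⊔ Q.subgroupOf (Subgroup.normalizer (Q : Set H))).map (Subgroup.normalizer (Q : Set H)).subtype :=
        ⟨xx, Subgroup.mem_sup_left hxx, rfl⟩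
      exact Subgroup.mem_subgroupOf.mpr (hL'le hmem)
  exact ⟨g, Q, hrad', hfull⟩
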